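/- Let G be a bipartite graph on n vertices with m edges and Laplacian eigenvalues μ₁,...,μₙ. Then LE(G*) = 2·LE(G) if and only if |μᵢ − 2m/n| ≥ 1 for all i = 1,...,n. -/

import Mathlib

open Matrix Polynomial BigOperators
open scoped Classical

/-- The extended double cover `G*` of a graph `G`. -/
def edc {V : Type*} (G : SimpleGraph V) : SimpleGraph (V ⊕ V) where
  Adj u v := match u, v with
    | Sum.inl i, Sum.inr j => i = j ∨ G.Adj i j
    | Sum.inr i, Sum.inl j => i = j ∨ G.Adj i j
    | _, _ => False
  symm := ⟨by rintro (i|i) (j|j) h <;> simp_all <;> exact h.imp Eq.symm fun hh => hh.symm⟩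
  loopless := ⟨by rintro (i|i) h <;> simp_all⟩

/-- The Laplacian matrix `L = D − A` of a graph. -/
noncomputable def lap {V : Type*} [Fintype V] [DecidableEq V] (G : SimpleGraph V) :
    Matrix V V ℝ :=
  Matrix.diagonal (fun i => (G.degree i : ℝ)) - G.adjMatrix ℝ

lemma charpoly_conj {V : Type*} [Fintype V] [DecidableEq V] (A P P' : Matrix V V ℝ)
    (h : P * P' = 1) : (P * A * P').charpoly = A.charpoly := by
  have h1 : (C : ℝ →+* ℝ[X]).mapMatrix P * (C : ℝ →+* ℝ[X]).mapMatrix P' = 1 := by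
    rw [← _root_.map_mul, h, _root_.map_one]
  have key : charmatrix (P * A * P') =
      (C : ℝ →+* ℝ[X]).mapMatrix P * charmatrix A * (C : ℝ →+* ℝ[X]).mapMatrix P' := by
    rw [show (P * A * P').charmatrix = scalar V (X : ℝ[X]) - (C : ℝ →+* ℝ[X]).mapMatrix (P * A * P') from rfl,
      show A.charmatrix = scalar V (X : ℝ[X]) - (C : ℝ →+* ℝ[X]).mapMatrix A from rfl,
      Matrix.mul_sub, Matrix.sub_mul]
    congr 1
    · rw [← (Matrix.scalar_commute (X : ℝ[X]) (fun r' => mul_comm _ _)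
        ((C : ℝ →+* ℝ[X]).mapMatrix P)).eq, mul_assoc, h1, mul_one]
    · rw [← _root_.map_mul, ← _root_.map_mul]
  rw [Matrix.charpoly, key, det_mul, det_mul, mul_comm, ← mul_assoc, ← det_mul, mul_eq_one_comm.mp h1, det_one,
    one_mul, Matrix.charpoly]

lemma charpoly_diag {V : Type*} [Fintype V] [DecidableEq V] (d : V → ℝ) :
    (Matrix.diagonal d).charpoly = ∏ i, (X - C (d i)) := by
  have : charmatrix (Matrix.diagonal d) = Matrix.diagonal (fun i => X - C (d i)) := by
    ext i j
    by_cases hij : i = j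
    · subst hij; simp
    · simp [Matrix.diagonal_apply_ne _ hij, charmatrix_apply_ne _ _ _ hij]
  rw [Matrix.charpoly, this, det_diagonal]

lemma charpoly_herm {V : Type*} [Fintype V] [DecidableEq V] {A : Matrix V V ℝ}
    (hA : A.IsHermitian) : A.charpoly = ∏ i, (X - C (hA.eigenvalues i)) := by
  have hU : (hA.eigenvectorUnitary : Matrix V V ℝ) * (star hA.eigenvectorUnitary : Matrix V V ℝ) = 1 := by
    exact Matrix.mem_unitaryGroup_iff.mp hA.eigenvectorUnitary.2
  conv_lhs => rw [hA.spectral_theorem, Unitary.conjStarAlgAut_apply]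
  rw [charpoly_conj _ _ _ hU]
  have : RCLike.ofReal ∘ hA.eigenvalues = hA.eigenvalues := by
    funext i; simp [RCLike.ofReal_real_eq_id]
  rw [this, charpoly_diag]


set_option linter.unusedSectionVars false

variable {V : Type*} [Fintype V] [DecidableEq V] (G : SimpleGraph V)

lemma edc_adj (u v : V ⊕ V) : (edc G).Adj u v ↔ (∃ i j, u = Sum.inl i ∧ v = Sum.inr j ∧ (i = j ∨ G.Adj i j)) ∨
    (∃ i j, u = Sum.inr i ∧ v = Sum.inl j ∧ (i = j ∨ G.Adj i j)) := by
  rcases u with i|i <;> rcases v with j|j <;> simp [edc]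

lemma degree_edc_inl (i : V) : (edc G).degree (Sum.inl i) = G.degree i + 1 := by
  have h : (edc G).neighborFinset (Sum.inl i)
      = (insert i (G.neighborFinset i)).map ⟨Sum.inr, Sum.inr_injective⟩ := by
    ext v
    rcases v with j|j <;>
      simp only [SimpleGraph.mem_neighborFinset] <;> simp [edc, eq_comm, or_comm]
  rw [SimpleGraph.degree, h, Finset.card_map,
    Finset.card_insert_of_notMem (by simp), SimpleGraph.degree]

lemma degree_edc_inr (i : V) : (edc G).degree (Sum.inr i) = G.degree i + 1 := by
  have h : (edc G).neighborFinset (Sum.inr i)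
      = (insert i (G.neighborFinset i)).map ⟨Sum.inl, Sum.inl_injective⟩ := by
    ext v
    rcases v with j|j <;>
      simp only [SimpleGraph.mem_neighborFinset] <;> simp [edc, eq_comm, or_comm]
  rw [SimpleGraph.degree, h, Finset.card_map,
    Finset.card_insert_of_notMem (by simp), SimpleGraph.degree]

lemma card_edc_edges : (edc G).edgeFinset.card = 2 * G.edgeFinset.card + Fintype.card V := by
  have h1 := SimpleGraph.sum_degrees_eq_twice_card_edges (edc G)
  have h2 := SimpleGraph.sum_degrees_eq_twice_card_edges G
  rw [Fintype.sum_sum_type] at h1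
  simp only [degree_edc_inl, degree_edc_inr, Finset.sum_add_distrib, Finset.sum_const,
    Finset.card_univ, smul_eq_mul, mul_one, h2] at h1
  omega

lemma lap_edc_eq :
    lap (edc G) = Matrix.fromBlocks
      (Matrix.diagonal (fun i => (G.degree i : ℝ)) + 1) (-(1 + G.adjMatrix ℝ))
      (-(1 + G.adjMatrix ℝ)) (Matrix.diagonal (fun i => (G.degree i : ℝ)) + 1) := by
  ext u v
  rcases u with i|i <;> rcases v with j|j <;>
    · by_cases hij : i = j
      · subst hij
        simp [lap, edc_adj G, degree_edc_inl, degree_edc_inr, Matrix.one_apply,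
          Matrix.diagonal_apply]
      · simp [lap, edc_adj G, Matrix.diagonal_apply, Matrix.one_apply, hij,
          Sum.inl.injEq, Sum.inr.injEq]

lemma conj_add_two {W : Type*} [Fintype W] [DecidableEq W] (M P P' : Matrix W W ℝ)
    (h : P * P' = 1) : P * (M + (1 + 1)) * P' = P * M * P' + (1 + 1) := by
  rw [Matrix.mul_add, Matrix.add_mul, Matrix.mul_add, Matrix.add_mul, Matrix.mul_one, h]

lemma charpoly_shift {W : Type*} [Fintype W] [DecidableEq W] {M : Matrix W W ℝ}
    (hM : M.IsHermitian) :
    (M + (1 + 1)).charpoly = ∏ i, (X - C (hM.eigenvalues i + 2)) := by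
  have hU : (hM.eigenvectorUnitary : Matrix W W ℝ) *
      (star hM.eigenvectorUnitary : Matrix W W ℝ) = 1 :=
    Matrix.mem_unitaryGroup_iff.mp hM.eigenvectorUnitary.2
  have hof : RCLike.ofReal ∘ hM.eigenvalues = hM.eigenvalues := by
    funext i; simp [RCLike.ofReal_real_eq_id]
  have key : M + (1 + 1) = (hM.eigenvectorUnitary : Matrix W W ℝ) *
      Matrix.diagonal (fun i => hM.eigenvalues i + 2) *
      (star hM.eigenvectorUnitary : Matrix W W ℝ) := by
    have hd : Matrix.diagonal (fun i => hM.eigenvalues i + 2)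
        = Matrix.diagonal hM.eigenvalues + (1 + 1) := by
      ext i j
      by_cases hij : i = j
      · subst hij; simp; norm_num
      · simp [Matrix.diagonal_apply_ne _ hij, Matrix.one_apply_ne hij]
    rw [hd, conj_add_two _ _ _ hU]
    conv_lhs => rw [hM.spectral_theorem, Unitary.conjStarAlgAut_apply, hof]
  rw [key, charpoly_conj _ _ _ hU, charpoly_diag]

/-- charpoly of the signless Laplacian plus 2, for bipartite graphs. -/
lemma charpoly_signless {V : Type*} [Fintype V] [DecidableEq V] (G : SimpleGraph V)
    (hbip : G.Colorable 2) (hL : (lap G).IsHermitian) :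
    (Matrix.diagonal (fun i => (G.degree i : ℝ)) + G.adjMatrix ℝ + (1 + 1)).charpoly
      = ∏ i, (X - C (hL.eigenvalues i + 2)) := by
  obtain ⟨c⟩ := hbip
  set s : V → ℝ := fun i => if c i = 0 then 1 else -1 with hs
  have hss : ∀ i, s i * s i = 1 := by
    intro i; by_cases h : c i = 0 <;> simp [hs, h]
  have hS : Matrix.diagonal s * Matrix.diagonal s = 1 := by
    rw [Matrix.diagonal_mul_diagonal, show (fun i => s i * s i) = fun _ => (1:ℝ) from funext hss,
      Matrix.diagonal_one]
  have hQ : Matrix.diagonal s * (lap G + (1 + 1)) * Matrix.diagonal s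
      = Matrix.diagonal (fun i => (G.degree i : ℝ)) + G.adjMatrix ℝ + (1 + 1) := by
    rw [conj_add_two _ _ _ hS]
    congr 1
    ext i j
    rw [Matrix.mul_diagonal, Matrix.diagonal_mul]
    by_cases hij : i = j
    · subst hij
      simp [lap, G.irrefl]
      linear_combination (↑(G.degree i) : ℝ) * hss i
    · by_cases hadj : G.Adj i j
      · have hcc : c i ≠ c j := c.valid hadj
        have hsij : s i * s j = -1 := by
          have h2 : ∀ a : Fin 2, a = 0 ∨ a = 1 := by decide
          rcases h2 (c i) with h1 | h1 <;> rcases h2 (c j) with h3 | h3 <;>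
            simp [hs, h1, h3] at hcc ⊢
        simp [lap, Matrix.diagonal_apply_ne _ hij, hadj]
        linear_combination -hsij
      · simp [lap, Matrix.diagonal_apply_ne _ hij, hadj]
  rw [← hQ, charpoly_conj _ _ _ hS, charpoly_shift hL]

lemma charpoly_lap_edc {V : Type*} [Fintype V] [DecidableEq V] (G : SimpleGraph V)
    (hbip : G.Colorable 2) (hL : (lap G).IsHermitian) :
    (lap (edc G)).charpoly
      = (∏ i, (X - C (hL.eigenvalues i))) * ∏ i, (X - C (hL.eigenvalues i + 2)) := by
  set D : Matrix V V ℝ := Matrix.diagonal (fun i => (G.degree i : ℝ)) with hD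
  set A : Matrix V V ℝ := G.adjMatrix ℝ with hA
  set P : Matrix (V ⊕ V) (V ⊕ V) ℝ := Matrix.fromBlocks 1 1 1 (-1) with hP
  set P' : Matrix (V ⊕ V) (V ⊕ V) ℝ :=
    Matrix.fromBlocks ((2:ℝ)⁻¹ • 1) ((2:ℝ)⁻¹ • 1) ((2:ℝ)⁻¹ • 1) (-((2:ℝ)⁻¹ • 1)) with hP'
  have hPP' : P * P' = 1 := by
    rw [hP, hP', Matrix.fromBlocks_multiply, ← Matrix.fromBlocks_one, Matrix.fromBlocks_inj]
    refine ⟨?_, ?_, ?_, ?_⟩ <;>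
      simp only [Matrix.one_mul, Matrix.neg_mul, Matrix.mul_neg, neg_neg, smul_neg] <;>
      module
  have hsim : P * lap (edc G) * P' = Matrix.fromBlocks (lap G) 0 0 (D + A + (1 + 1)) := by
    rw [lap_edc_eq, hP, hP', Matrix.fromBlocks_multiply, Matrix.fromBlocks_multiply,
      Matrix.fromBlocks_inj]
    refine ⟨?_, ?_, ?_, ?_⟩ <;>
      simp only [Matrix.one_mul, Matrix.neg_mul, Matrix.mul_neg, neg_neg, smul_neg,
        Matrix.mul_smul, Matrix.mul_one, lap, ← hD, ← hA] <;>
      module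
  have := charpoly_conj (lap (edc G)) P P' hPP'
  rw [hsim] at this
  rw [← this, Matrix.charpoly_fromBlocks_zero₁₂, charpoly_herm hL,
    charpoly_signless G hbip hL]

lemma abs_ge_aux (a : ℝ) : 2 * |a| ≤ |a - 1| + |a + 1| := by
  rcases abs_cases a with ⟨h1, h2⟩ | ⟨h1, h2⟩ <;>
    rcases abs_cases (a - 1) with ⟨h3, h4⟩ | ⟨h3, h4⟩ <;>
    rcases abs_cases (a + 1) with ⟨h5, h6⟩ | ⟨h5, h6⟩ <;> linarith

lemma abs_key_aux (a : ℝ) : |a - 1| + |a + 1| = 2 * |a| ↔ 1 ≤ |a| := by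
  rcases abs_cases a with ⟨h1, h2⟩ | ⟨h1, h2⟩ <;>
    rcases abs_cases (a - 1) with ⟨h3, h4⟩ | ⟨h3, h4⟩ <;>
    rcases abs_cases (a + 1) with ⟨h5, h6⟩ | ⟨h5, h6⟩ <;>
    rw [h1, h3, h5] <;> constructor <;> intro h <;> linarith

/-- Let `G` be a bipartite graph on `n` vertices with `m` edges and
Laplacian eigenvalues `μ₁,…,μₙ`.  Then `LE(G*) = 2·LE(G)` if and only if
`|μᵢ − 2m/n| ≥ 1` for all `i`, where `LE(H) = Σ |νᵢ − 2M/N|` over the Laplacian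
eigenvalues of a graph `H` with `N` vertices and `M` edges. -/
theorem stmt18 {n : ℕ} (G : SimpleGraph (Fin n)) (hbip : G.Colorable 2)
    (m : ℕ) (hm : G.edgeFinset.card = m)
    (hL : (lap G).IsHermitian) (hLs : (lap (edc G)).IsHermitian) :
    (∑ p, |hLs.eigenvalues p -
        2 * ((edc G).edgeFinset.card : ℝ) / (Fintype.card (Fin n ⊕ Fin n))| =
      2 * ∑ i, |hL.eigenvalues i - 2 * (m : ℝ) / (n : ℝ)|) ↔
    ∀ i, 1 ≤ |hL.eigenvalues i - 2 * (m : ℝ) / (n : ℝ)| := by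
  rcases Nat.eq_zero_or_pos n with h0 | hn
  · subst h0
    constructor
    · intro _ i; exact i.elim0
    · intro _; simp
  · have hn0 : (n : ℝ) ≠ 0 := Nat.cast_ne_zero.mpr hn.ne'
    set μ := hL.eigenvalues with hμ
    set ν := hLs.eigenvalues with hν
    set c : ℝ := 2 * (m : ℝ) / (n : ℝ) with hc
    have hconst : 2 * ((edc G).edgeFinset.card : ℝ) / (Fintype.card (Fin n ⊕ Fin n)) = c + 1 := by
      rw [card_edc_edges G, hm, hc]
      simp only [Fintype.card_sum, Fintype.card_fin]
      push_cast
      field_simp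
      ring
    -- multiset equality of eigenvalues
    have hpoly : ((Finset.univ.val.map ν).map (fun a => X - Polynomial.C a)).prod =
        (((Finset.univ.val.map μ) + (Finset.univ.val.map (fun i => μ i + 2))).map
          (fun a => X - Polynomial.C a)).prod := by
      rw [Multiset.map_add, Multiset.prod_add, Multiset.map_map, Multiset.map_map,
        Multiset.map_map]
      have e1 : (∏ p, (X - Polynomial.C (ν p))) =
          (∏ i, (X - Polynomial.C (μ i))) * ∏ i, (X - Polynomial.C (μ i + 2)) := by
        rw [hν, hμ, ← charpoly_herm hLs, charpoly_lap_edc G hbip hL]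
      exact e1
    have hms : Finset.univ.val.map ν
        = Finset.univ.val.map μ + Finset.univ.val.map (fun i => μ i + 2) := by
      have := congrArg Polynomial.roots hpoly
      rwa [Polynomial.roots_multiset_prod_X_sub_C, Polynomial.roots_multiset_prod_X_sub_C]
        at this
    have hsum : ∀ f : ℝ → ℝ, ∑ p, f (ν p) = ∑ i, f (μ i) + ∑ i, f (μ i + 2) := by
      intro f
      have l1 : ∑ p, f (ν p) = ((Finset.univ.val.map ν).map f).sum := by
        rw [Multiset.map_map]; rfl
      have l2 : ∑ i, f (μ i) = ((Finset.univ.val.map μ).map f).sum := by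
        rw [Multiset.map_map]; rfl
      have l3 : ∑ i, f (μ i + 2) = ((Finset.univ.val.map (fun i => μ i + 2)).map f).sum := by
        rw [Multiset.map_map]; rfl
      rw [l1, l2, l3, hms, Multiset.map_add, Multiset.sum_add]
    have lhs_eq : ∑ p, |ν p -
          2 * ((edc G).edgeFinset.card : ℝ) / (Fintype.card (Fin n ⊕ Fin n))|
        = ∑ i, (|μ i - c - 1| + |μ i - c + 1|) := by
      rw [hconst, hsum (fun x => |x - (c + 1)|), ← Finset.sum_add_distrib]
      refine Finset.sum_congr rfl fun i _ => ?_
      rw [show μ i - (c + 1) = μ i - c - 1 by ring, show μ i + 2 - (c + 1) = μ i - c + 1 by ring]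
    rw [lhs_eq]
    constructor
    · intro h i
      have h2 : ∑ i, (2 * |μ i - c|) = 2 * ∑ i, |μ i - c| := by rw [Finset.mul_sum]
      have h0 : ∑ i, ((|μ i - c - 1| + |μ i - c + 1|) - 2 * |μ i - c|) = 0 := by
        rw [Finset.sum_sub_distrib, h, ← h2, sub_self]
      have := (Finset.sum_eq_zero_iff_of_nonneg
        (fun j _ => sub_nonneg.mpr (abs_ge_aux (μ j - c)))).mp h0 i (Finset.mem_univ i)
      exact (abs_key_aux (μ i - c)).mp (by linarith)
    · intro h
      rw [Finset.sum_congr rfl (fun i _ => (abs_key_aux (μ i - c)).mpr (h i)), ← Finset.mul_sum]
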